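/- Let D = −i d/dx on L²(ℝ) and λ ∈ ℂ with Im(λ²) > 0. For u ∈ L²(ℝ, ℂ), the integral kernel of (D + λ²)^{-1} is i e^{iλ²(x−y)} 𝟙_{x>y} (suitably interpreted), and the Hilbert–Schmidt norm of the operator (D+λ²)^{-1} u (D−λ²)^{-1} conj(u) satisfies ‖(D+λ²)^{-1} u (D−λ²)^{-1} ū‖₂² ≤ (1/Im λ²) ‖u‖_{L²}² ‖(D+2λ²)^{-1} u‖_{L∞}². -/

import Mathlib

open MeasureTheory Complex Set

/-- The integral kernel of the free resolvent `(D + λ²)⁻¹` of `D = −i d/dx` (for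
`Im λ² > 0`), as stated: `i e^{iλ²(x−y)} 𝟙_{x>y}`. -/
noncomputable def kerDplus (lam : ℂ) (x y : ℝ) : ℂ :=
  if y < x then Complex.I * Complex.exp (Complex.I * lam ^ 2 * ((x : ℂ) - y)) else 0

/-- The integral kernel of the free resolvent `(D − λ²)⁻¹` of `D = −i d/dx` (for
`Im λ² > 0`), with the complementary orientation: `−i e^{-iλ²(x−y)} 𝟙_{x<y}`. -/
noncomputable def kerDminus (lam : ℂ) (x y : ℝ) : ℂ :=
  if x < y then -Complex.I * Complex.exp (-Complex.I * lam ^ 2 * ((x : ℂ) - y)) else 0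

/-- The integral kernel of `(D+λ²)⁻¹ u (D−λ²)⁻¹ conj u`, where `u` and `conj u` act as
multiplication operators. -/
noncomputable def compKer (u : ℝ → ℂ) (lam : ℂ) (x y : ℝ) : ℂ :=
  (∫ z : ℝ, kerDplus lam x z * u z * kerDminus lam z y) * (starRingEnd ℂ) (u y)

/-- `(D + 2λ²)⁻¹ u`, realized via the resolvent kernel. -/
noncomputable def resolvent2 (u : ℝ → ℂ) (lam : ℂ) (x : ℝ) : ℂ :=
  ∫ y : ℝ, (if y < x then Complex.I * Complex.exp (2 * Complex.I * lam ^ 2 * ((x : ℂ) - y))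
    else 0) * u y

/-! ### Auxiliary integral computations -/

lemma exp_integral_Ioi_aux {b : ℝ} (hb : 0 < b) :
    ∫ x in Ioi (0:ℝ), Real.exp (-b * x) = 1 / b := by
  have hd : ∀ x ∈ Ioi (0:ℝ), HasDerivAt (fun x => -Real.exp (-b * x) / b)
      (Real.exp (-b * x)) x := by
    intro x _
    have : HasDerivAt (fun x => -Real.exp (-b * x) / b)
        (-(Real.exp (-b * id x) * (-b * 1)) / b) x :=
      (((hasDerivAt_id x).const_mul (-b)).exp.neg).div_const b
    convert this using 1
    simp only [id]
    field_simp
  have hc : ContinuousWithinAt (fun x => -Real.exp (-b * x) / b) (Ici (0:ℝ)) 0 :=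
    ((Real.continuous_exp.comp (continuous_const.mul continuous_id)).neg.div_const
      b).continuousWithinAt
  have ht : Filter.Tendsto (fun x => -Real.exp (-b * x) / b) Filter.atTop (nhds 0) := by
    have : Filter.Tendsto (fun x : ℝ => Real.exp (-b * x)) Filter.atTop (nhds 0) :=
      Real.tendsto_exp_atBot.comp (Filter.tendsto_id.const_mul_atTop_of_neg (by linarith))
    simpa using (this.neg.div_const b)
  have := MeasureTheory.integral_Ioi_of_hasDerivAt_of_tendsto hc hd
    (exp_neg_integrableOn_Ioi 0 hb) ht
  rw [this]; simp [div_eq_mul_inv]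

lemma gfun_integrable_aux {b : ℝ} (hb : 0 < b) :
    Integrable (fun t : ℝ => if 0 < t then Real.exp (-b * t) else 0) := by
  have : (fun t : ℝ => if 0 < t then Real.exp (-b * t) else 0)
      = Set.indicator (Ioi (0:ℝ)) (fun t => Real.exp (-b * t)) := by
    funext t; simp [Set.indicator_apply, mem_Ioi]
  rw [this]
  exact (exp_neg_integrableOn_Ioi 0 hb).integrable_indicator measurableSet_Ioi

lemma gfun_integral_aux {b : ℝ} (hb : 0 < b) :
    ∫ t : ℝ, (if 0 < t then Real.exp (-b * t) else 0) = 1 / b := by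
  have : (fun t : ℝ => if 0 < t then Real.exp (-b * t) else 0)
      = Set.indicator (Ioi (0:ℝ)) (fun t => Real.exp (-b * t)) := by
    funext t; simp [Set.indicator_apply, mem_Ioi]
  rw [this, integral_indicator measurableSet_Ioi, exp_integral_Ioi_aux hb]

lemma cut_integrable_aux {b : ℝ} (hb : 0 < b) (x : ℝ) :
    Integrable (fun z : ℝ => if z < x then Real.exp (-b * (x - z)) else 0) := by
  have h := ((gfun_integrable_aux hb).comp_neg (μ := (volume : Measure ℝ))).comp_sub_right x
  refine h.congr (Filter.Eventually.of_forall fun z => ?_)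
  show (if 0 < -(z - x) then Real.exp (-b * -(z - x)) else 0)
      = if z < x then Real.exp (-b * (x - z)) else 0
  rw [show -(z - x) = x - z by ring]
  congr 1
  simp [sub_pos]

lemma cut_integral_aux {b : ℝ} (hb : 0 < b) (x : ℝ) :
    ∫ z : ℝ, (if z < x then Real.exp (-b * (x - z)) else 0) = 1 / b := by
  have h1 : (fun z : ℝ => if z < x then Real.exp (-b * (x - z)) else 0)
      = fun z : ℝ => (fun t => if 0 < t then Real.exp (-b * t) else 0) (-(z - x)) := by
    funext z
    rw [show -(z - x) = x - z by ring]
    congr 1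
    simp [sub_pos]
  rw [h1]
  rw [integral_sub_right_eq_self
    (fun z : ℝ => (fun t => if 0 < t then Real.exp (-b * t) else 0) (-z)) x]
  rw [integral_neg_eq_self (fun t : ℝ => if 0 < t then Real.exp (-b * t) else 0) volume]
  exact gfun_integral_aux hb

lemma absexp_integrable_aux {b : ℝ} (hb : 0 < b) (c : ℝ) :
    Integrable (fun x : ℝ => Real.exp (-b * |x - c|)) := by
  have h1 : IntegrableOn (fun x : ℝ => Real.exp (-b * |x|)) (Ioi 0) :=
    (exp_neg_integrableOn_Ioi 0 hb).congr_fun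
      (fun x hx => by rw [abs_of_pos hx]) measurableSet_Ioi
  have h2 : IntegrableOn (fun x : ℝ => Real.exp (-b * |x|)) (Iic 0) := by
    rw [← Measure.map_neg_eq_self (volume : Measure ℝ)]
    have m : MeasurableEmbedding fun x : ℝ => -x := (Homeomorph.neg ℝ).measurableEmbedding
    rw [m.integrableOn_map_iff]
    simp only [Function.comp_def, abs_neg, neg_preimage, neg_Iic, neg_zero]
    exact (integrableOn_Ici_iff_integrableOn_Ioi).mpr h1
  have h3 : Integrable (fun x : ℝ => Real.exp (-b * |x|)) := by
    rw [← integrableOn_univ, ← Iic_union_Ioi (a := (0:ℝ))]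
    exact h2.union h1
  exact h3.comp_sub_right c

lemma absexp_integral_aux {b : ℝ} (hb : 0 < b) (c : ℝ) :
    ∫ x : ℝ, Real.exp (-b * |x - c|) = 2 / b := by
  rw [show (fun x : ℝ => Real.exp (-b * |x - c|))
      = fun x : ℝ => (fun t => Real.exp (-b * |t|)) (x - c) from rfl]
  rw [integral_sub_right_eq_self (fun t : ℝ => Real.exp (-b * |t|)) c]
  rw [integral_comp_abs (f := fun t : ℝ => Real.exp (-b * t)), exp_integral_Ioi_aux hb]
  ring

/-! ### The kernel identity -/

lemma re_aux (lam : ℂ) (r : ℝ) : (Complex.I * lam ^ 2 * (r : ℂ)).re = -(lam ^ 2).im * r := by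
  simp [Complex.mul_re, Complex.mul_im]

lemma compKer_eq (u : ℝ → ℂ) (lam : ℂ) (x y : ℝ) :
    compKer u lam x y =
      Complex.exp (Complex.I * lam ^ 2 * ((x : ℂ) + y - 2 * ((min x y : ℝ) : ℂ)))
        * (-Complex.I) * resolvent2 u lam (min x y) * (starRingEnd ℂ) (u y) := by
  set m := min x y with hm
  have key : ∀ z : ℝ, kerDplus lam x z * u z * kerDminus lam z y
      = (Complex.exp (Complex.I * lam ^ 2 * ((x : ℂ) + y - 2 * ((m : ℝ) : ℂ))) * (-Complex.I)) *
        ((if z < m then Complex.I * Complex.exp (2 * Complex.I * lam ^ 2 * (((m : ℝ) : ℂ) - z))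
          else 0) * u z) := by
    intro z
    unfold kerDplus kerDminus
    by_cases h1 : z < x
    · by_cases h2 : z < y
      · rw [if_pos h1, if_pos h2, if_pos (lt_min h1 h2)]
        have harg : Complex.exp (Complex.I * lam ^ 2 * ((x : ℂ) - z))
            * Complex.exp (-Complex.I * lam ^ 2 * ((z : ℂ) - y))
            = Complex.exp (Complex.I * lam ^ 2 * ((x : ℂ) + y - 2 * ((m : ℝ) : ℂ)))
            * Complex.exp (2 * Complex.I * lam ^ 2 * (((m : ℝ) : ℂ) - z)) := by
          rw [← Complex.exp_add, ← Complex.exp_add]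
          congr 1
          ring
        linear_combination (-Complex.I * Complex.I * u z) * harg
      · have hzm : ¬ z < m := fun hz => h2 (lt_of_lt_of_le hz (min_le_right x y))
        rw [if_neg h2, if_neg hzm]
        ring
    · have hzm : ¬ z < m := fun hz => h1 (lt_of_lt_of_le hz (min_le_left x y))
      rw [if_neg h1, if_neg hzm]
      ring
  unfold compKer resolvent2
  rw [integral_congr_ae (Filter.Eventually.of_forall key), MeasureTheory.integral_const_mul]

lemma norm_compKer (u : ℝ → ℂ) (lam : ℂ) (x y : ℝ) :
    ‖compKer u lam x y‖ = Real.exp (-(lam ^ 2).im * |x - y|)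
      * ‖resolvent2 u lam (min x y)‖ * ‖u y‖ := by
  rw [compKer_eq]
  rw [norm_mul, norm_mul, norm_mul, norm_neg, Complex.norm_I, mul_one,
    Complex.norm_exp, RCLike.norm_conj]
  congr 3
  have : (x : ℂ) + y - 2 * ((min x y : ℝ) : ℂ) = ((x + y - 2 * min x y : ℝ) : ℂ) := by
    push_cast; ring
  rw [this, re_aux]
  congr 1
  rw [show x + y - 2 * min x y = max x y - min x y by rcases le_total x y with h | h <;>
    simp [min_eq_left, max_eq_right, min_eq_right, max_eq_left, h] <;> ring]
  rw [max_sub_min_eq_abs, abs_sub_comm]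

/-! ### Uniform bound on the resolvent -/

lemma resolvent2_bound (u : ℝ → ℂ) (hu : MemLp u 2 (volume : Measure ℝ)) (lam : ℂ)
    (h : 0 < (lam ^ 2).im) (x : ℝ) :
    ‖resolvent2 u lam x‖ ≤ (1 / (4 * (lam ^ 2).im)) ^ (1/2 : ℝ)
      * (∫ z : ℝ, ‖u z‖ ^ (2:ℝ)) ^ (1/2 : ℝ) := by
  set b := (lam ^ 2).im
  set e : ℝ → ℝ := fun z => if z < x then Real.exp (-(2*b) * (x - z)) else 0 with he_def
  have he_eq : e = Set.indicator (Iio x) (fun z => Real.exp (-(2*b) * (x - z))) := by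
    funext z; simp [he_def, Set.indicator_apply, mem_Iio]
  have he_meas : AEStronglyMeasurable e (volume : Measure ℝ) := by
    rw [he_eq]
    exact ((Real.continuous_exp.comp (by fun_prop)).stronglyMeasurable.indicator
      measurableSet_Iio).aestronglyMeasurable
  have he_nonneg : ∀ z, 0 ≤ e z := by
    intro z; rw [he_def]; dsimp only; split <;> positivity
  have step1 : ‖resolvent2 u lam x‖ ≤ ∫ z : ℝ, e z * ‖u z‖ := by
    refine (norm_integral_le_integral_norm _).trans_eq (integral_congr_ae
      (Filter.Eventually.of_forall fun z => ?_))
    show ‖_ * u z‖ = e z * ‖u z‖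
    rw [norm_mul]
    congr 1
    rw [he_def]
    dsimp only
    split
    · rw [norm_mul, Complex.norm_I, one_mul, Complex.norm_exp]
      congr 1
      have : 2 * Complex.I * lam ^ 2 * ((x : ℂ) - z)
          = Complex.I * lam ^ 2 * (((2 * (x - z) : ℝ)) : ℂ) := by push_cast; ring
      rw [this, re_aux]
      ring
    · simp
  have he2 : MemLp e (ENNReal.ofReal 2) (volume : Measure ℝ) := by
    rw [show ENNReal.ofReal 2 = 2 by norm_num]
    rw [memLp_two_iff_integrable_sq he_meas]
    have : (fun z => e z ^ 2) = fun z : ℝ => if z < x then Real.exp (-(4*b) * (x - z)) else 0 := by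
      funext z
      rw [he_def]
      dsimp only
      split
      · rw [sq, ← Real.exp_add]
        congr 1
        ring
      · simp
    rw [this]
    exact cut_integrable_aux (by linarith) x
  have hun : MemLp (fun z => ‖u z‖) (ENNReal.ofReal 2) (volume : Measure ℝ) := by
    rw [show ENNReal.ofReal 2 = 2 by norm_num]; exact hu.norm
  have holder := integral_mul_le_Lp_mul_Lq_of_nonneg
    Real.HolderConjugate.two_two
    (Filter.Eventually.of_forall he_nonneg)
    (Filter.Eventually.of_forall fun z => norm_nonneg (u z)) he2 hun
  refine step1.trans (holder.trans_eq ?_)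
  congr 2
  have h2 : ∀ t : ℝ, t ^ (2:ℝ) = t ^ (2:ℕ) := fun t => by
    rw [show (2:ℝ) = ((2:ℕ):ℝ) by norm_num, Real.rpow_natCast]
  calc ∫ z : ℝ, e z ^ (2:ℝ)
      = ∫ z : ℝ, (if z < x then Real.exp (-(4*b) * (x - z)) else 0) := by
        refine integral_congr_ae (Filter.Eventually.of_forall fun z => ?_)
        show e z ^ (2:ℝ) = _
        rw [h2, he_def]
        dsimp only
        split
        · rw [sq, ← Real.exp_add]; congr 1; ring
        · simp
    _ = 1 / (4 * b) := cut_integral_aux (by linarith) x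

/-! ### Main theorem -/

theorem hilbertSchmidt_bound_resolvent_product (u : ℝ → ℂ)
    (hu : MemLp u 2 (volume : Measure ℝ)) (lam : ℂ) (h : 0 < (lam ^ 2).im) :
    (∫ x : ℝ, ∫ y : ℝ, ‖compKer u lam x y‖ ^ 2) ≤
      1 / (lam ^ 2).im * (∫ x : ℝ, ‖u x‖ ^ 2) * (⨆ x : ℝ, ‖resolvent2 u lam x‖) ^ 2 := by
  set β := (lam ^ 2).im with hβdef
  set S : ℝ := ⨆ x : ℝ, ‖resolvent2 u lam x‖ with hSdef
  have hbdd : BddAbove (Set.range fun x : ℝ => ‖resolvent2 u lam x‖) := by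
    refine ⟨(1 / (4 * β)) ^ (1/2 : ℝ) * (∫ z : ℝ, ‖u z‖ ^ (2:ℝ)) ^ (1/2 : ℝ), ?_⟩
    rintro y ⟨x, rfl⟩
    exact resolvent2_bound u hu lam h x
  have hS : ∀ m : ℝ, ‖resolvent2 u lam m‖ ≤ S := fun m => le_ciSup hbdd m
  have hS0 : 0 ≤ S := le_trans (norm_nonneg _) (hS 0)
  have hu2 : Integrable (fun z : ℝ => ‖u z‖ ^ 2) :=
    (memLp_two_iff_integrable_sq_norm hu.aestronglyMeasurable).mp hu
  set G : ℝ → ℝ → ℝ := fun x y => Real.exp (-(2*β) * |x - y|) * ‖u y‖ ^ 2 with hGdef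
  have h2β : (0:ℝ) < 2 * β := by linarith
  have hGnonneg : ∀ x y, 0 ≤ G x y := fun x y => by
    rw [hGdef]; positivity
  have hGmeas : AEStronglyMeasurable (Function.uncurry G) (volume.prod volume) := by
    apply AEStronglyMeasurable.mul
    · exact (Real.continuous_exp.comp (by fun_prop)).aestronglyMeasurable
    · exact ((continuous_pow 2).comp_aestronglyMeasurable
        (hu.aestronglyMeasurable.comp_snd (μ := (volume : Measure ℝ))).norm)
  have hGint_x : ∀ y : ℝ, Integrable (fun x => G x y) volume := fun y =>
    (absexp_integrable_aux h2β y).mul_const _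
  have hGx : ∀ y : ℝ, (∫ x : ℝ, G x y) = ‖u y‖ ^ 2 * (1 / β) := by
    intro y
    rw [hGdef]
    dsimp only
    rw [MeasureTheory.integral_mul_const, absexp_integral_aux h2β y]
    rw [show (2 : ℝ) / (2 * β) = 1 / β by field_simp]
    ring
  have hGprod : Integrable (Function.uncurry G) (volume.prod volume) := by
    rw [integrable_prod_iff' hGmeas]
    refine ⟨Filter.Eventually.of_forall fun y => hGint_x y, ?_⟩
    have : (fun y : ℝ => ∫ x : ℝ, ‖Function.uncurry G (x, y)‖)
        = fun y : ℝ => ‖u y‖ ^ 2 * (1 / β) := by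
      funext y
      rw [← hGx y]
      refine integral_congr_ae (Filter.Eventually.of_forall fun x => ?_)
      exact Real.norm_of_nonneg (hGnonneg x y)
    rw [this]
    exact hu2.mul_const _
  have hpoint : ∀ x y : ℝ, ‖compKer u lam x y‖ ^ 2 ≤ S ^ 2 * G x y := by
    intro x y
    rw [norm_compKer]
    have step : (Real.exp (-β * |x - y|) * ‖resolvent2 u lam (min x y)‖ * ‖u y‖) ^ 2
        ≤ (Real.exp (-β * |x - y|) * S * ‖u y‖) ^ 2 := by
      apply pow_le_pow_left₀ (by positivity)
      gcongr
      exact hS (min x y)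
    refine step.trans_eq ?_
    rw [hGdef]
    dsimp only
    rw [mul_pow, mul_pow, sq (Real.exp _), ← Real.exp_add]
    ring_nf
  have hinner : ∀ x : ℝ, (∫ y : ℝ, ‖compKer u lam x y‖ ^ 2) ≤ ∫ y : ℝ, S ^ 2 * G x y := by
    intro x
    refine integral_mono_of_nonneg (Filter.Eventually.of_forall fun y => by positivity) ?_
      (Filter.Eventually.of_forall fun y => hpoint x y)
    have habs : Integrable (fun y : ℝ => Real.exp (-(2*β) * |y - x|)) :=
      absexp_integrable_aux h2β x
    have habs' : Integrable (fun y : ℝ => Real.exp (-(2*β) * |x - y|)) := by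
      refine habs.congr (Filter.Eventually.of_forall fun y => ?_)
      show Real.exp (-(2*β) * |y - x|) = Real.exp (-(2*β) * |x - y|)
      rw [abs_sub_comm]
    have : Integrable (fun y : ℝ => G x y) := by
      rw [hGdef]
      dsimp only
      refine hu2.bdd_mul habs'.aestronglyMeasurable (c := 1) (Filter.Eventually.of_forall fun y => ?_)
      rw [Real.norm_of_nonneg (Real.exp_nonneg _)]
      exact Real.exp_le_one_iff.mpr
        (mul_nonpos_of_nonpos_of_nonneg (by linarith) (abs_nonneg _))
    exact this.const_mul _
  have houter_int : Integrable (fun x : ℝ => ∫ y : ℝ, S ^ 2 * G x y) volume := by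
    have h1 : (fun x : ℝ => ∫ y : ℝ, S ^ 2 * G x y)
        = fun x : ℝ => S ^ 2 * ∫ y : ℝ, G x y := by
      funext x
      exact MeasureTheory.integral_const_mul _ _
    rw [h1]
    have h2 : Integrable (fun x : ℝ => ∫ y : ℝ, Function.uncurry G (x, y)) volume :=
      hGprod.integral_prod_left
    exact (h2.const_mul (S^2)).congr (Filter.Eventually.of_forall fun x => by
      simp only [Function.uncurry_apply_pair])
  calc (∫ x : ℝ, ∫ y : ℝ, ‖compKer u lam x y‖ ^ 2)
      ≤ ∫ x : ℝ, ∫ y : ℝ, S ^ 2 * G x y := by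
        refine integral_mono_of_nonneg (Filter.Eventually.of_forall fun x =>
          integral_nonneg fun y => by positivity) houter_int
          (Filter.Eventually.of_forall fun x => hinner x)
    _ = S ^ 2 * ∫ x : ℝ, ∫ y : ℝ, G x y := by
        simp_rw [MeasureTheory.integral_const_mul]
    _ = S ^ 2 * ∫ y : ℝ, ∫ x : ℝ, G x y := by
        rw [integral_integral_swap hGprod]
    _ = S ^ 2 * ∫ y : ℝ, ‖u y‖ ^ 2 * (1 / β) := by
        simp_rw [hGx]
    _ = 1 / β * (∫ x : ℝ, ‖u x‖ ^ 2) * S ^ 2 := by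
        rw [MeasureTheory.integral_mul_const]
        ring
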